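/- For every integer N ≥ 1 and every δ ∈ (0, 1], the Lebesgue measure of the set S_N(δ) = {(x₁, …, x_N) ∈ [0,1]^N : x₁·x₂·…·x_N ≤ δ} equals δ · Σ_{i=0}^{N−1} (log(1/δ))^i / i!. -/

import Mathlib

open MeasureTheory Set

-- measurability of the sublevel set
lemma st4_meas (n : ℕ) (δ : ℝ) :
    MeasurableSet {x : Fin n → ℝ | (∀ i, x i ∈ Set.Icc (0 : ℝ) 1) ∧ ∏ i, x i ≤ δ} := by
  have h1 : {x : Fin n → ℝ | ∀ i, x i ∈ Set.Icc (0 : ℝ) 1}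
      = Set.univ.pi (fun _ => Set.Icc (0:ℝ) 1) := by ext x; simp [Set.mem_pi, Pi.le_def, forall_and]
  have h2 : Measurable fun x : Fin n → ℝ => ∏ i, x i :=
    Finset.measurable_prod _ fun i _ => measurable_pi_apply i
  have : {x : Fin n → ℝ | (∀ i, x i ∈ Set.Icc (0 : ℝ) 1) ∧ ∏ i, x i ≤ δ}
      = {x : Fin n → ℝ | ∀ i, x i ∈ Set.Icc (0 : ℝ) 1} ∩ {x | ∏ i, x i ≤ δ} := rfl
  rw [this, h1]
  exact (MeasurableSet.univ_pi fun i => measurableSet_Icc).inter (h2 measurableSet_Iic)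

lemma st4_cube (n : ℕ) : volume {y : Fin n → ℝ | ∀ i, y i ∈ Set.Icc (0 : ℝ) 1} = 1 := by
  have h1 : {x : Fin n → ℝ | ∀ i, x i ∈ Set.Icc (0 : ℝ) 1}
      = Set.univ.pi (fun _ => Set.Icc (0:ℝ) 1) := by ext x; simp [Set.mem_pi, Pi.le_def, forall_and]
  rw [h1, volume_pi_pi]
  simp

lemma st4_termInt (δ : ℝ) (hδ0 : 0 < δ) (hδ1 : δ ≤ 1) (i : ℕ) :
    ∫ a in δ..1, δ / a * (Real.log a - Real.log δ) ^ i / (Nat.factorial i)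
      = δ * (-Real.log δ) ^ (i + 1) / (Nat.factorial (i + 1)) := by
  have key : ∀ a ∈ Set.uIcc δ 1,
      HasDerivAt (fun a => δ * (Real.log a - Real.log δ) ^ (i + 1) / (Nat.factorial (i + 1)))
        (δ / a * (Real.log a - Real.log δ) ^ i / (Nat.factorial i)) a := by
    intro a ha
    rw [Set.uIcc_of_le hδ1] at ha
    have ha0 : 0 < a := lt_of_lt_of_le hδ0 ha.1
    have h1 : HasDerivAt (fun a => Real.log a - Real.log δ) a⁻¹ a :=
      (Real.hasDerivAt_log ha0.ne').sub_const _
    have h2 := ((h1.pow (i + 1)).const_mul δ).div_const ((Nat.factorial (i + 1) : ℝ))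
    convert h2 using 1
    · rfl
    · rfl
    · rfl
    have : ((Nat.factorial (i+1) : ℝ)) = (i+1) * (Nat.factorial i) := by
      rw [Nat.factorial_succ]; push_cast; ring
    rw [this]
    rw [Nat.add_sub_cancel]; push_cast
    field_simp
  have hcont : ContinuousOn
      (fun a : ℝ => δ / a * (Real.log a - Real.log δ) ^ i / (Nat.factorial i))
      (Set.uIcc δ 1) := by
    have h0 : ∀ a ∈ Set.uIcc δ 1, a ≠ 0 := by
      rw [Set.uIcc_of_le hδ1]
      exact fun a ha => (lt_of_lt_of_le hδ0 ha.1).ne'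
    exact ((continuousOn_const.div continuousOn_id h0).mul
      (((Real.continuousOn_log.mono (fun a ha => h0 a ha)).sub continuousOn_const).pow i)).div_const _
  rw [intervalIntegral.integral_eq_sub_of_hasDerivAt key hcont.intervalIntegrable]
  simp [Real.log_one, zero_sub]

lemma st4_main (N : ℕ) (hN : 1 ≤ N) : ∀ δ : ℝ, 0 < δ → δ ≤ 1 →
    volume {x : Fin N → ℝ | (∀ i, x i ∈ Set.Icc (0 : ℝ) 1) ∧ ∏ i, x i ≤ δ} =
      ENNReal.ofReal (δ * ∑ i ∈ Finset.range N, (-Real.log δ) ^ i / (Nat.factorial i)) := by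
  induction N, hN using Nat.le_induction with
  | base =>
    intro δ hδ0 hδ1
    have hset : {x : Fin 1 → ℝ | (∀ i, x i ∈ Set.Icc (0 : ℝ) 1) ∧ ∏ i, x i ≤ δ}
        = Set.univ.pi (fun _ : Fin 1 => Set.Icc (0:ℝ) δ) := by
      ext x
      simp only [Set.mem_setOf_eq, Fin.forall_fin_one, Fin.prod_univ_one, Set.mem_pi,
        Set.mem_univ, forall_true_left, Set.mem_Icc]
      constructor
      · rintro ⟨⟨h1, _⟩, h3⟩; exact ⟨h1, h3⟩
      · intro h; exact ⟨⟨h.1, h.2.trans hδ1⟩, h.2⟩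
    rw [hset, volume_pi_pi]
    simp [Real.volume_Icc, hδ0.le]
  | succ N hN IH =>
    intro δ hδ0 hδ1
    set S := {x : Fin (N+1) → ℝ | (∀ i, x i ∈ Set.Icc (0 : ℝ) 1) ∧ ∏ i, x i ≤ δ} with hSdef
    set T : Set (ℝ × (Fin N → ℝ)) :=
      {p | (p.1 ∈ Set.Icc (0:ℝ) 1 ∧ ∀ i, p.2 i ∈ Set.Icc (0:ℝ) 1) ∧ p.1 * ∏ i, p.2 i ≤ δ}
        with hTdef
    have hS : MeasurableSet S := st4_meas _ _
    set e := MeasurableEquiv.piFinSuccAbove (fun _ : Fin (N+1) => ℝ) 0 with hedef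
    have hpres := (volume_preserving_piFinSuccAbove (fun _ : Fin (N+1) => ℝ) 0).symm e
    have hTS : e.symm ⁻¹' S = T := by
      ext p
      simp only [Set.mem_preimage, hSdef, Set.mem_setOf_eq, hedef,
        MeasurableEquiv.piFinSuccAbove_symm_apply, Fin.insertNth_zero, hTdef]
      rw [Fin.forall_fin_succ, Fin.prod_univ_succ]
      simp [Fin.cons_zero, Fin.cons_succ]
    have hvol : volume S = volume T := by
      rw [← hTS, hpres.measure_preimage hS.nullMeasurableSet]
    have hT : MeasurableSet T := by rw [← hTS]; exact hS.preimage e.symm.measurable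
    rw [hvol, Measure.volume_eq_prod, Measure.prod_apply hT]
    -- the slice function
    have hslice0 : ∀ a : ℝ, a ∉ Set.Icc (0:ℝ) 1 → volume (Prod.mk a ⁻¹' T) = 0 := by
      intro a ha
      have : Prod.mk a ⁻¹' T = ∅ := by
        ext y; simp only [Set.mem_preimage, hTdef, Set.mem_setOf_eq, Set.mem_empty_iff_false,
          iff_false]
        rintro ⟨⟨h1, _⟩, _⟩; exact ha h1
      rw [this, measure_empty]
    have hslice1 : ∀ a ∈ Set.Icc (0:ℝ) δ, volume (Prod.mk a ⁻¹' T) = 1 := by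
      intro a ha
      have : Prod.mk a ⁻¹' T = {y : Fin N → ℝ | ∀ i, y i ∈ Set.Icc (0:ℝ) 1} := by
        ext y
        simp only [Set.mem_preimage, hTdef, Set.mem_setOf_eq]
        constructor
        · rintro ⟨⟨_, h2⟩, _⟩; exact h2
        · intro h
          have hy1 : ∏ i, y i ≤ 1 :=
            Finset.prod_le_one (fun i _ => (h i).1) (fun i _ => (h i).2)
          have hy0 : 0 ≤ ∏ i, y i := Finset.prod_nonneg (fun i _ => (h i).1)
          refine ⟨⟨⟨ha.1, ha.2.trans hδ1⟩, h⟩, ?_⟩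
          calc a * ∏ i, y i ≤ a * 1 := mul_le_mul_of_nonneg_left hy1 ha.1
            _ ≤ δ := by linarith [ha.2]
      rw [this, st4_cube]
    set g : ℝ → ℝ := fun a =>
      ∑ i ∈ Finset.range N, δ / a * (Real.log a - Real.log δ) ^ i / (Nat.factorial i) with hgdef
    have hslice2 : ∀ a ∈ Set.Ioc δ 1, volume (Prod.mk a ⁻¹' T) = ENNReal.ofReal (g a) := by
      intro a ha
      have ha0 : 0 < a := hδ0.trans ha.1
      have hda0 : 0 < δ / a := div_pos hδ0 ha0
      have hda1 : δ / a ≤ 1 := (div_le_one ha0).2 ha.1.le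
      have : Prod.mk a ⁻¹' T
          = {y : Fin N → ℝ | (∀ i, y i ∈ Set.Icc (0:ℝ) 1) ∧ ∏ i, y i ≤ δ / a} := by
        ext y
        simp only [Set.mem_preimage, hTdef, Set.mem_setOf_eq]
        constructor
        · rintro ⟨⟨_, h2⟩, h3⟩
          exact ⟨h2, (le_div_iff₀ ha0).2 (by linarith [mul_comm a (∏ i, y i)])⟩
        · rintro ⟨h2, h3⟩
          refine ⟨⟨⟨ha0.le, ha.2⟩, h2⟩, ?_⟩
          have := (le_div_iff₀ ha0).1 h3
          linarith [mul_comm (∏ i, y i) a]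
      rw [this, IH (δ / a) hda0 hda1]
      congr 1
      rw [hgdef]
      have hlog : -Real.log (δ / a) = Real.log a - Real.log δ := by
        rw [Real.log_div hδ0.ne' ha0.ne']; ring
      rw [hlog, Finset.mul_sum]
      exact Finset.sum_congr rfl fun i _ => by rw [mul_div_assoc]
    -- split the integral
    have hmeasf : Measurable fun a => volume (Prod.mk a ⁻¹' T) := measurable_measure_prodMk_left hT
    have hsplit : ∫⁻ a, volume (Prod.mk a ⁻¹' T)
        = (∫⁻ a in Set.Icc (0:ℝ) δ, volume (Prod.mk a ⁻¹' T))
          + ∫⁻ a in Set.Ioc δ 1, volume (Prod.mk a ⁻¹' T) := by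
      rw [← lintegral_add_compl (fun a => volume (Prod.mk a ⁻¹' T)) (measurableSet_Icc
        (a := (0:ℝ)) (b := 1))]
      have hz : ∫⁻ a in (Set.Icc (0:ℝ) 1)ᶜ, volume (Prod.mk a ⁻¹' T) = 0 := by
        rw [setLIntegral_congr_fun measurableSet_Icc.compl
          (fun a ha => hslice0 a ha)]
        simp
      rw [hz, add_zero, ← Set.Icc_union_Ioc_eq_Icc hδ0.le hδ1,
        lintegral_union measurableSet_Ioc]
      rw [Set.disjoint_left]
      intro a ha1 ha2
      exact absurd ha1.2 (not_le.2 ha2.1)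
    rw [hsplit]
    have hpart1 : ∫⁻ a in Set.Icc (0:ℝ) δ, volume (Prod.mk a ⁻¹' T) = ENNReal.ofReal δ := by
      rw [setLIntegral_congr_fun measurableSet_Icc
        (fun a ha => hslice1 a ha)]
      simp [Real.volume_Icc]
    have hgnn : ∀ a ∈ Set.Ioc δ 1, 0 ≤ g a := by
      intro a ha
      have ha0 : 0 < a := hδ0.trans ha.1
      refine Finset.sum_nonneg fun i _ => div_nonneg (mul_nonneg (div_nonneg hδ0.le ha0.le)
        (pow_nonneg (sub_nonneg.2 ?_) i)) (Nat.cast_nonneg _)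
      exact Real.log_le_log hδ0 ha.1.le
    have hgcont : ContinuousOn g (Set.Icc δ 1) := by
      apply continuousOn_finset_sum
      intro i _
      have h0 : ∀ a ∈ Set.Icc δ 1, a ≠ 0 := fun a ha => (lt_of_lt_of_le hδ0 ha.1).ne'
      exact ((continuousOn_const.div continuousOn_id h0).mul
        (((Real.continuousOn_log.mono (fun a ha => h0 a ha)).sub continuousOn_const).pow i)).div_const _
    have hgint : IntegrableOn g (Set.Ioc δ 1) :=
      (hgcont.integrableOn_Icc).mono_set Set.Ioc_subset_Icc_self
    have hpart2 : ∫⁻ a in Set.Ioc δ 1, volume (Prod.mk a ⁻¹' T)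
        = ENNReal.ofReal (∑ i ∈ Finset.range N,
            δ * (-Real.log δ) ^ (i + 1) / (Nat.factorial (i + 1))) := by
      rw [setLIntegral_congr_fun measurableSet_Ioc
        (fun a ha => hslice2 a ha)]
      rw [← ofReal_integral_eq_lintegral_ofReal hgint
        ((ae_restrict_iff' measurableSet_Ioc).2 (Filter.Eventually.of_forall hgnn))]
      congr 1
      rw [← intervalIntegral.integral_of_le hδ1, hgdef]
      rw [intervalIntegral.integral_finset_sum]
      · exact Finset.sum_congr rfl fun i _ => st4_termInt δ hδ0 hδ1 i
      · intro i _
        have h0 : ∀ a ∈ Set.uIcc δ 1, a ≠ 0 := by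
          rw [Set.uIcc_of_le hδ1]
          exact fun a ha => (lt_of_lt_of_le hδ0 ha.1).ne'
        exact (((continuousOn_const.div continuousOn_id h0).mul
          (((Real.continuousOn_log.mono (fun a ha => h0 a ha)).sub
            continuousOn_const).pow i)).div_const _).intervalIntegrable
    rw [hpart1, hpart2, ← ENNReal.ofReal_add hδ0.le]
    · congr 1
      rw [Finset.sum_range_succ', mul_add, Finset.mul_sum, add_comm]
      simp [mul_div_assoc]
    · exact Finset.sum_nonneg fun i _ => div_nonneg (mul_nonneg hδ0.le
        (pow_nonneg (neg_nonneg.2 (Real.log_nonpos hδ0.le hδ1)) _)) (Nat.cast_nonneg _)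

/-- The Lebesgue measure of
`S_N(δ) = {x ∈ [0,1]^N : x₁ ⋯ x_N ≤ δ}` equals `δ · ∑_{i=0}^{N-1} (log(1/δ))^i / i!`. -/
theorem statement4 (N : ℕ) (hN : 1 ≤ N) (δ : ℝ) (hδ : δ ∈ Set.Ioc (0 : ℝ) 1) :
    volume {x : Fin N → ℝ | (∀ i, x i ∈ Set.Icc (0 : ℝ) 1) ∧ ∏ i, x i ≤ δ} =
      ENNReal.ofReal (δ * ∑ i ∈ Finset.range N, (Real.log (1 / δ)) ^ i / (Nat.factorial i)) := by
  rw [one_div, Real.log_inv]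
  exact st4_main N hN δ hδ.1 hδ.2
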